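/- Let E be a finite-dimensional real inner product space, let W be a finite group of linear isometries of E, and let λ ∈ E. Let (x_n)_{n≥0} be a sequence in E such that ‖x_{n+1} − x_n‖/n → 0 as n → ∞, and such that there exists a sequence (w_n)_{n≥0} of elements of W with ‖x_n − n·w_n(λ)‖/n → 0 as n → ∞. Then there exists a single element w ∈ W such that ‖x_n − n·w(λ)‖/n → 0 as n → ∞; moreover the sequence (w_n(λ))_{n≥0} is eventually constant. -/

import Mathlib

open Filter

theorem regular_direction_stabilizes
    {E : Type*} [NormedAddCommGroup E] [InnerProductSpace ℝ E] [FiniteDimensional ℝ E]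
    (W : Subgroup (E ≃ₗᵢ[ℝ] E)) [Finite W] (l₀ : E)
    (x : ℕ → E) (w : ℕ → W)
    (hstep : Tendsto (fun n : ℕ => ‖x (n + 1) - x n‖ / n) atTop (nhds 0))
    (happrox : Tendsto
      (fun n : ℕ => ‖x n - (n : ℝ) • ((w n : E ≃ₗᵢ[ℝ] E) l₀)‖ / n) atTop (nhds 0)) :
    ∃ w₀ ∈ W,
      Tendsto (fun n : ℕ => ‖x n - (n : ℝ) • (w₀ l₀)‖ / n) atTop (nhds 0) ∧
      ∀ᶠ n in atTop, (w n : E ≃ₗᵢ[ℝ] E) l₀ = w₀ l₀ := by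
  classical
  have := Fintype.ofFinite W
  set v : ℕ → E := fun n => (w n : E ≃ₗᵢ[ℝ] E) l₀ with hv
  -- shifted approximation
  have h1 : Tendsto (fun n : ℕ => ‖x (n+1) - ((n+1:ℕ):ℝ) • v (n+1)‖ / ((n+1:ℕ):ℝ))
      atTop (nhds 0) := happrox.comp (tendsto_add_atTop_nat 1)
  have h2 : Tendsto (fun n : ℕ => ((n:ℝ)+1) / n) atTop (nhds 1) := by
    have h3 : Tendsto (fun n : ℕ => 1 + 1/(n:ℝ)) atTop (nhds 1) := by
      simpa using tendsto_const_nhds.add (tendsto_one_div_atTop_nhds_zero_nat : Tendsto (fun n : ℕ => 1 / (n:ℝ)) atTop (nhds 0))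
    apply h3.congr'
    filter_upwards [eventually_ge_atTop 1] with n hn
    have hn' : (n:ℝ) ≠ 0 := by positivity
    field_simp
  have hshift : Tendsto (fun n : ℕ => ‖x (n+1) - ((n:ℝ)+1) • v (n+1)‖ / n)
      atTop (nhds 0) := by
    have := h1.mul h2
    rw [zero_mul] at this
    apply this.congr'
    filter_upwards [eventually_ge_atTop 1] with n hn
    have hn' : (n:ℝ) ≠ 0 := by positivity
    have hn1 : ((n:ℝ)+1) ≠ 0 := by positivity
    push_cast
    field_simp
  have hl0 : Tendsto (fun n : ℕ => ‖l₀‖ / n) atTop (nhds 0) :=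
    tendsto_const_div_atTop_nhds_zero_nat _
  have hsum : Tendsto (fun n : ℕ =>
      (‖x (n+1) - ((n:ℝ)+1) • v (n+1)‖ + ‖x (n+1) - x n‖ + ‖x n - (n:ℝ) • v n‖ + ‖l₀‖) / n)
      atTop (nhds 0) := by
    have := ((hshift.add hstep).add happrox).add hl0
    simp only [add_zero] at this
    apply this.congr
    intro n
    ring
  -- key bound
  have key : ∀ᶠ n in atTop, ‖v (n+1) - v n‖ ≤
      (‖x (n+1) - ((n:ℝ)+1) • v (n+1)‖ + ‖x (n+1) - x n‖ + ‖x n - (n:ℝ) • v n‖ + ‖l₀‖) / n := by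
    filter_upwards [eventually_ge_atTop 1] with n hn
    have hn' : (0:ℝ) < n := by positivity
    have hid : (n:ℝ) • (v (n+1) - v n) =
        (((n:ℝ)+1) • v (n+1) - x (n+1)) + (x (n+1) - x n) + (x n - (n:ℝ) • v n) - v (n+1) := by
      simp only [smul_sub, add_smul, one_smul]; abel
    have hnorm : (n:ℝ) * ‖v (n+1) - v n‖ ≤
        ‖x (n+1) - ((n:ℝ)+1) • v (n+1)‖ + ‖x (n+1) - x n‖ + ‖x n - (n:ℝ) • v n‖ + ‖l₀‖ := by
      have : (n:ℝ) * ‖v (n+1) - v n‖ = ‖(n:ℝ) • (v (n+1) - v n)‖ := by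
        rw [norm_smul, Real.norm_natCast]
      rw [this, hid]
      have hvnorm : ‖v (n+1)‖ = ‖l₀‖ := (w (n+1) : E ≃ₗᵢ[ℝ] E).norm_map l₀
      calc ‖(((n:ℝ)+1) • v (n+1) - x (n+1)) + (x (n+1) - x n) + (x n - (n:ℝ) • v n) - v (n+1)‖
          ≤ ‖(((n:ℝ)+1) • v (n+1) - x (n+1)) + (x (n+1) - x n) + (x n - (n:ℝ) • v n)‖ + ‖v (n+1)‖ :=
            norm_sub_le _ _
        _ ≤ ‖(((n:ℝ)+1) • v (n+1) - x (n+1))‖ + ‖x (n+1) - x n‖ + ‖x n - (n:ℝ) • v n‖ + ‖v (n+1)‖ := by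
            gcongr
            exact (norm_add_le _ _).trans (by gcongr; exact norm_add_le _ _)
        _ = ‖x (n+1) - ((n:ℝ)+1) • v (n+1)‖ + ‖x (n+1) - x n‖ + ‖x n - (n:ℝ) • v n‖ + ‖l₀‖ := by
            rw [norm_sub_rev, hvnorm]
    rw [le_div_iff₀ hn']
    linarith [hnorm]
  have hdiff : Tendsto (fun n : ℕ => ‖v (n+1) - v n‖) atTop (nhds 0) :=
    squeeze_zero' (Eventually.of_forall fun n => norm_nonneg _) key hsum
  -- finiteness / separation
  set T : Finset E := Finset.image (fun g : W => (g : E ≃ₗᵢ[ℝ] E) l₀) Finset.univ with hT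
  have hvT : ∀ n, v n ∈ T := fun n => Finset.mem_image_of_mem _ (Finset.mem_univ _)
  obtain ⟨ε, hε, hsep⟩ : ∃ ε > 0, ∀ a ∈ T, ∀ b ∈ T, ‖a - b‖ < ε → a = b := by
    set D : Finset ℝ := ((T ×ˢ T).image (fun p => ‖p.1 - p.2‖)).filter (fun r => 0 < r) with hD
    by_cases hne : D.Nonempty
    · refine ⟨D.min' hne, (Finset.mem_filter.1 (D.min'_mem hne)).2, ?_⟩
      intro a ha b hb hab
      by_contra hne'
      have hpos : 0 < ‖a - b‖ := by
        rw [norm_pos_iff, sub_ne_zero]; exact hne'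
      have hmem : ‖a - b‖ ∈ D := by
        rw [hD, Finset.mem_filter]
        exact ⟨Finset.mem_image.2 ⟨(a, b), Finset.mem_product.2 ⟨ha, hb⟩, rfl⟩, hpos⟩
      exact absurd (D.min'_le _ hmem) (not_le.2 hab)
    · refine ⟨1, one_pos, ?_⟩
      intro a ha b hb _
      by_contra hne'
      have hpos : 0 < ‖a - b‖ := by
        rw [norm_pos_iff, sub_ne_zero]; exact hne'
      exact hne ⟨‖a - b‖, by
        rw [hD, Finset.mem_filter]
        exact ⟨Finset.mem_image.2 ⟨(a, b), Finset.mem_product.2 ⟨ha, hb⟩, rfl⟩, hpos⟩⟩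
  have hev : ∀ᶠ n in atTop, ‖v (n+1) - v n‖ < ε := hdiff.eventually (gt_mem_nhds hε)
  obtain ⟨N, hN⟩ := eventually_atTop.1 hev
  have hconst : ∀ n ≥ N, v n = v N := by
    intro n hn
    induction n, hn using Nat.le_induction with
    | base => rfl
    | succ n hn ih =>
      rw [← ih]
      exact hsep _ (hvT _) _ (hvT _) (hN n hn)
  refine ⟨(w N : E ≃ₗᵢ[ℝ] E), (w N).2, ?_, ?_⟩
  · apply happrox.congr'
    filter_upwards [eventually_ge_atTop N] with n hn
    rw [show ((w n : E ≃ₗᵢ[ℝ] E) l₀) = v n from rfl, hconst n hn]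
  · filter_upwards [eventually_ge_atTop N] with n hn
    exact hconst n hn
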